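/- arXiv:2211.01083 — 4 statements merged into one kernel-verified Lean document; each statement's English description precedes it below -/
import Mathlib

section
/- Let d_1 ≥ d_2 ≥ ... ≥ d_n be the degree sequence of a finite simple graph G in decreasing order. In the Maker-Maker scoring game Incidence on G (players alternately claim vertices, a player scores one point for each edge both of whose endpoints they claimed, and the score of a play is Left's points minus Right's points, defined by minimax over all plays), the optimal score with Left moving first equals (1/2)·(Σ_{i odd} d_i − Σ_{i even} d_i). -/
/-- Minimax value of a scoring positional game: players alternately claim
unclaimed vertices (`turn = true` means Left/Maker to move); when all vertices
are claimed the value is given by `score VL VR`. Left maximizes, Right minimizes. -/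
noncomputable def gameValue {V : Type} [Fintype V] [DecidableEq V]
    (score : Finset V → Finset V → ℤ) :
    Bool → Finset V → Finset V → ℤ := fun turn VL VR =>
  if h : (VL ∪ VR)ᶜ = (∅ : Finset V) then score VL VR
  else
    have hne : ((VL ∪ VR)ᶜ).attach.Nonempty :=
      Finset.attach_nonempty_iff.mpr (Finset.nonempty_iff_ne_empty.mpr h)
    if turn then
      ((VL ∪ VR)ᶜ).attach.sup' hne (fun v => gameValue score false (insert v.1 VL) VR)
    else
      ((VL ∪ VR)ᶜ).attach.inf' hne (fun v => gameValue score true VL (insert v.1 VR))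
termination_by turn VL VR => ((VL ∪ VR)ᶜ).card
decreasing_by
  · rw [Finset.insert_union, Finset.compl_insert]
    exact Finset.card_erase_lt_of_mem v.2
  · rw [Finset.union_insert, Finset.compl_insert]
    exact Finset.card_erase_lt_of_mem v.2

/-- Maker-Breaker Incidence final score: number of edges of `G` both of whose
endpoints belong to Left's (Maker's) set. -/
noncomputable def mbScore {V : Type} [Fintype V] [DecidableEq V]
    (G : SimpleGraph V) (VL : Finset V) (_ : Finset V) : ℤ :=
  ({e ∈ G.edgeSet | ∀ w ∈ e, w ∈ VL} : Set (Sym2 V)).ncard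

/-- Maker-Maker Incidence final score: Left's edges minus Right's edges. -/
noncomputable def mmScore {V : Type} [Fintype V] [DecidableEq V]
    (G : SimpleGraph V) (VL VR : Finset V) : ℤ :=
  (({e ∈ G.edgeSet | ∀ w ∈ e, w ∈ VL} : Set (Sym2 V)).ncard : ℤ)
    - (({e ∈ G.edgeSet | ∀ w ∈ e, w ∈ VR} : Set (Sym2 V)).ncard : ℤ)

noncomputable def LsMB {V : Type} [Fintype V] [DecidableEq V] (G : SimpleGraph V) : ℤ :=
  gameValue (mbScore G) true ∅ ∅

noncomputable def RsMB {V : Type} [Fintype V] [DecidableEq V] (G : SimpleGraph V) : ℤ :=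
  gameValue (mbScore G) false ∅ ∅

noncomputable def LsMM {V : Type} [Fintype V] [DecidableEq V] (G : SimpleGraph V) : ℤ :=
  gameValue (mmScore G) true ∅ ∅

noncomputable def RsMM {V : Type} [Fintype V] [DecidableEq V] (G : SimpleGraph V) : ℤ :=
  gameValue (mmScore G) false ∅ ∅

/-- Maker-Breaker final score on a hypergraph with edge set `E`. -/
def mbScoreH {V : Type} [Fintype V] [DecidableEq V]
    (E : Finset (Finset V)) (VL : Finset V) (_ : Finset V) : ℤ :=
  ((E.filter (fun e => e ⊆ VL)).card : ℤ)

/-- Maker-Maker final score on a hypergraph with edge set `E`. -/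
def mmScoreH {V : Type} [Fintype V] [DecidableEq V]
    (E : Finset (Finset V)) (VL VR : Finset V) : ℤ :=
  ((E.filter (fun e => e ⊆ VL)).card : ℤ) - ((E.filter (fun e => e ⊆ VR)).card : ℤ)


/-! ### Auxiliary machinery for the Maker-Maker Incidence value theorem -/

section IncidenceAux

/-- Alternating sum of a list: `alt [a,b,c,...] = a - b + c - ...`. -/
private def altSum : List ℤ → ℤ
  | [] => 0
  | x :: xs => x - altSum xs

private lemma altSum_erase_le :
    ∀ (l : List ℤ), l.Pairwise (· ≥ ·) → ∀ b ∈ l, b - altSum (l.erase b) ≤ altSum l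
  | [] => by simp
  | [a] => by
      intro _ b hb
      simp only [List.mem_singleton] at hb
      subst hb
      simp [altSum]
  | a :: c :: u => by
      intro hs b hb
      have hac : a ≥ c := (List.pairwise_cons.mp hs).1 c (by simp)
      by_cases hba : b = a
      · subst hba
        rw [List.erase_cons_head]
        simp [altSum]
      · have hb' : b ∈ c :: u := by
          rcases List.mem_cons.mp hb with h | h
          · exact absurd h hba
          · exact h
        have hba' : b ≤ a := (List.pairwise_cons.mp hs).1 b hb'
        rw [List.erase_cons_tail (by simpa using (Ne.symm hba))]
        by_cases hbc : b = c
        · subst hbc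
          rw [List.erase_cons_head]
          simp only [altSum]
          linarith
        · have hbu : b ∈ u := by
            rcases List.mem_cons.mp hb' with h | h
            · exact absurd h hbc
            · exact h
          rw [List.erase_cons_tail (by simpa using (Ne.symm hbc))]
          have ihu := altSum_erase_le u
            ((List.pairwise_cons.mp (List.pairwise_cons.mp hs).2).2) b hbu
          simp only [altSum]
          linarith

private lemma altSum_ofFn : ∀ (n : ℕ) (g : Fin n → ℤ),
    altSum (List.ofFn g) = ∑ i : Fin n, (-1 : ℤ) ^ (i : ℕ) * g i := by
  intro n
  induction n with
  | zero => intro g; simp [altSum]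
  | succ n ih =>
      intro g
      rw [List.ofFn_succ]
      show g 0 - altSum (List.ofFn fun i => g i.succ) = _
      rw [ih, Fin.sum_univ_succ]
      have : ∀ i : Fin n, (-1 : ℤ) ^ ((i.succ : Fin (n+1)) : ℕ) * g i.succ
          = -((-1 : ℤ) ^ (i : ℕ) * g i.succ) := by
        intro i; rw [Fin.val_succ, pow_succ]; ring
      rw [Finset.sum_congr rfl (fun i _ => this i), Finset.sum_neg_distrib]
      simp
      ring

variable {V : Type} [Fintype V] [DecidableEq V]

/-- The weights of a finset of vertices, sorted in decreasing order. -/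
private noncomputable def wList (w : V → ℤ) (S : Finset V) : List ℤ :=
  Multiset.sort (S.val.map w) (· ≥ ·)

private lemma wList_sorted (w : V → ℤ) (S : Finset V) : (wList w S).Pairwise (· ≥ ·) :=
  Multiset.pairwise_sort _ _

private lemma wList_coe (w : V → ℤ) (S : Finset V) :
    ((wList w S) : Multiset ℤ) = S.val.map w :=
  Multiset.sort_eq _ _

private lemma wList_empty (w : V → ℤ) : wList w (∅ : Finset V) = [] := by
  have h := wList_coe w (∅ : Finset V)
  simp only [Finset.empty_val, Multiset.map_zero] at h
  exact (Multiset.coe_eq_zero _).mp h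

private lemma wList_erase (w : V → ℤ) (S : Finset V) (v : V) (hv : v ∈ S) :
    wList w (S.erase v) = (wList w S).erase (w v) := by
  apply List.Perm.eq_of_pairwise' (wList_sorted w _) ((wList_sorted w S).erase _)
  rw [← Multiset.coe_eq_coe, wList_coe, ← Multiset.coe_erase, wList_coe]
  have h1 : S.val = v ::ₘ (S.erase v).val := by
    rw [Finset.erase_val]
    exact (Multiset.cons_erase (by exact hv)).symm
  rw [h1, Multiset.map_cons, Multiset.erase_cons_head]

private lemma wList_mem (w : V → ℤ) (S : Finset V) (v : V) (hv : v ∈ S) :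
    w v ∈ wList w S := by
  have : w v ∈ ((wList w S) : Multiset ℤ) := by
    rw [wList_coe]
    exact Multiset.mem_map_of_mem w hv
  simpa using this

private lemma wList_move_le (w : V → ℤ) (S : Finset V) (v : V) (hv : v ∈ S) :
    w v - altSum (wList w (S.erase v)) ≤ altSum (wList w S) := by
  rw [wList_erase w S v hv]
  exact altSum_erase_le _ (wList_sorted w S) _ (wList_mem w S v hv)

private lemma wList_exists_opt (w : V → ℤ) (S : Finset V) (hS : S.Nonempty) :
    ∃ v ∈ S, w v - altSum (wList w (S.erase v)) = altSum (wList w S) := by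
  have hne : wList w S ≠ [] := by
    intro h
    have h2 := wList_coe w S
    rw [h] at h2
    have h3 : S.val.map w = 0 := by simpa using h2.symm
    rw [Multiset.map_eq_zero] at h3
    exact hS.ne_empty (Finset.val_eq_zero.mp h3)
  obtain ⟨a, t, ht⟩ := List.exists_cons_of_ne_nil hne
  have ha : a ∈ ((wList w S) : Multiset ℤ) := by rw [ht]; simp
  rw [wList_coe] at ha
  obtain ⟨v, hv, hwv⟩ := Multiset.mem_map.mp ha
  refine ⟨v, hv, ?_⟩
  rw [wList_erase w S v hv, hwv, ht, List.erase_cons_head]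
  show a - altSum t = altSum (a :: t)
  rfl

private lemma compl_insert_left (v : V) (VL VR : Finset V) :
    (insert v VL ∪ VR)ᶜ = ((VL ∪ VR)ᶜ).erase v := by
  rw [Finset.insert_union, Finset.compl_insert]

private lemma compl_insert_right (v : V) (VL VR : Finset V) :
    (VL ∪ insert v VR)ᶜ = ((VL ∪ VR)ᶜ).erase v := by
  rw [Finset.union_insert, Finset.compl_insert]

/-- The value of a game only depends on the score function on complete positions. -/
private lemma gameValue_congr (s1 s2 : Finset V → Finset V → ℤ)
    (h : ∀ A B : Finset V, Disjoint A B → A ∪ B = Finset.univ → s1 A B = s2 A B) :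
    ∀ (n : ℕ) (turn : Bool) (VL VR : Finset V), ((VL ∪ VR)ᶜ).card = n →
      Disjoint VL VR → gameValue s1 turn VL VR = gameValue s2 turn VL VR := by
  intro n
  induction n using Nat.strong_induction_on with
  | _ n ih =>
    intro turn VL VR hn hdisj
    by_cases h0 : (VL ∪ VR)ᶜ = (∅ : Finset V)
    · rw [gameValue, gameValue, dif_pos h0, dif_pos h0]
      exact h VL VR hdisj (by rwa [Finset.compl_eq_empty_iff] at h0)
    · have key : ∀ (v : V), v ∈ (VL ∪ VR)ᶜ → v ∉ VL ∧ v ∉ VR := by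
        intro v hv
        rw [Finset.mem_compl, Finset.mem_union] at hv
        exact ⟨fun hh => hv (Or.inl hh), fun hh => hv (Or.inr hh)⟩
      cases turn with
      | true =>
          rw [gameValue, gameValue, dif_neg h0, dif_neg h0]
          simp only [if_true]
          apply Finset.sup'_congr _ rfl
          intro v hv
          have hcard : ((insert v.1 VL ∪ VR)ᶜ).card < n := by
            rw [compl_insert_left]
            exact hn ▸ Finset.card_erase_lt_of_mem v.2
          exact ih _ hcard false _ _ rfl
            (Finset.disjoint_insert_left.mpr ⟨(key v.1 v.2).2, hdisj⟩)
      | false =>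
          rw [gameValue, gameValue, dif_neg h0, dif_neg h0]
          simp only [Bool.false_eq_true, if_false]
          apply Finset.inf'_congr _ rfl
          intro v hv
          have hcard : ((VL ∪ insert v.1 VR)ᶜ).card < n := by
            rw [compl_insert_right]
            exact hn ▸ Finset.card_erase_lt_of_mem v.2
          exact ih _ hcard true _ _ rfl
            (Finset.disjoint_insert_right.mpr ⟨(key v.1 v.2).1, hdisj⟩)

/-- `gameValue` commutes with doubling the score. -/
private lemma gameValue_two_mul (s : Finset V → Finset V → ℤ) :
    ∀ (n : ℕ) (turn : Bool) (VL VR : Finset V), ((VL ∪ VR)ᶜ).card = n →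
      gameValue (fun A B => 2 * s A B) turn VL VR = 2 * gameValue s turn VL VR := by
  intro n
  induction n using Nat.strong_induction_on with
  | _ n ih =>
    intro turn VL VR hn
    by_cases h0 : (VL ∪ VR)ᶜ = (∅ : Finset V)
    · rw [gameValue, gameValue, dif_pos h0, dif_pos h0]
    · cases turn with
      | true =>
          rw [gameValue, gameValue, dif_neg h0, dif_neg h0]
          simp only [if_true]
          rw [Finset.comp_sup'_eq_sup'_comp _ (fun x : ℤ => 2 * x)
            (fun x y => by simpa using (mul_max_of_nonneg x y (by norm_num : (0:ℤ) ≤ 2)))]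
          apply Finset.sup'_congr _ rfl
          intro v hv
          have hcard : ((insert v.1 VL ∪ VR)ᶜ).card < n := by
            rw [compl_insert_left]
            exact hn ▸ Finset.card_erase_lt_of_mem v.2
          exact ih _ hcard false _ _ rfl
      | false =>
          rw [gameValue, gameValue, dif_neg h0, dif_neg h0]
          simp only [Bool.false_eq_true, if_false]
          rw [Finset.apply_inf'_eq_inf'_comp _ (fun x : ℤ => 2 * x)
            (fun x y => by simpa using (mul_min_of_nonneg x y (by norm_num : (0:ℤ) ≤ 2)))]
          apply Finset.inf'_congr _ rfl
          intro v hv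
          have hcard : ((VL ∪ insert v.1 VR)ᶜ).card < n := by
            rw [compl_insert_right]
            exact hn ▸ Finset.card_erase_lt_of_mem v.2
          exact ih _ hcard true _ _ rfl

/-- The fixed-weight score: sum of Left's weights minus sum of Right's weights. -/
private def linScore (w : V → ℤ) (A B : Finset V) : ℤ := (∑ v ∈ A, w v) - ∑ v ∈ B, w v

/-- Evaluation of the game with a fixed-weight (linear) score: greedy play is
optimal, so the value is the alternating sum of the sorted remaining weights. -/
private lemma gameValue_lin (w : V → ℤ) :
    ∀ (n : ℕ) (turn : Bool) (VL VR : Finset V), ((VL ∪ VR)ᶜ).card = n →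
      gameValue (linScore w) turn VL VR =
        linScore w VL VR +
          (if turn then altSum (wList w ((VL ∪ VR)ᶜ))
           else - altSum (wList w ((VL ∪ VR)ᶜ))) := by
  intro n
  induction n using Nat.strong_induction_on with
  | _ n ih =>
    intro turn VL VR hn
    by_cases h0 : (VL ∪ VR)ᶜ = (∅ : Finset V)
    · rw [gameValue, dif_pos h0, h0, wList_empty]
      cases turn <;> simp [altSum]
    · have hSne : ((VL ∪ VR)ᶜ).Nonempty := Finset.nonempty_iff_ne_empty.mpr h0
      have key : ∀ (v : V), v ∈ (VL ∪ VR)ᶜ → v ∉ VL ∧ v ∉ VR := by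
        intro v hv
        rw [Finset.mem_compl, Finset.mem_union] at hv
        exact ⟨fun hh => hv (Or.inl hh), fun hh => hv (Or.inr hh)⟩
      cases turn with
      | true =>
          rw [gameValue, dif_neg h0]
          simp only [if_true]
          have hval : ∀ v : {x // x ∈ (VL ∪ VR)ᶜ},
              gameValue (linScore w) false (insert v.1 VL) VR =
                linScore w VL VR + (w v.1 - altSum (wList w (((VL ∪ VR)ᶜ).erase v.1))) := by
            intro v
            have hcard : ((insert v.1 VL ∪ VR)ᶜ).card < n := by
              rw [compl_insert_left]
              exact hn ▸ Finset.card_erase_lt_of_mem v.2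
            rw [ih _ hcard false _ _ rfl, compl_insert_left]
            have h4 : linScore w (insert v.1 VL) VR = w v.1 + linScore w VL VR := by
              unfold linScore
              rw [Finset.sum_insert (key v.1 v.2).1]
              ring
            rw [h4]
            simp only [Bool.false_eq_true, if_false]
            ring
          apply le_antisymm
          · apply Finset.sup'_le
            intro v hv
            rw [hval v]
            have := wList_move_le w ((VL ∪ VR)ᶜ) v.1 v.2
            linarith
          · obtain ⟨v, hv, hopt⟩ := wList_exists_opt w ((VL ∪ VR)ᶜ) hSne
            refine le_trans ?_ (Finset.le_sup' _ (Finset.mem_attach _ ⟨v, hv⟩))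
            rw [hval ⟨v, hv⟩]
            simp only
            rw [hopt]
      | false =>
          rw [gameValue, dif_neg h0]
          simp only [Bool.false_eq_true, if_false]
          have hval : ∀ v : {x // x ∈ (VL ∪ VR)ᶜ},
              gameValue (linScore w) true VL (insert v.1 VR) =
                linScore w VL VR
                  + (- w v.1 + altSum (wList w (((VL ∪ VR)ᶜ).erase v.1))) := by
            intro v
            have hcard : ((VL ∪ insert v.1 VR)ᶜ).card < n := by
              rw [compl_insert_right]
              exact hn ▸ Finset.card_erase_lt_of_mem v.2
            rw [ih _ hcard true _ _ rfl, compl_insert_right]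
            have h4 : linScore w VL (insert v.1 VR) = - w v.1 + linScore w VL VR := by
              unfold linScore
              rw [Finset.sum_insert (key v.1 v.2).2]
              ring
            rw [h4]
            simp only [if_true]
            ring
          apply le_antisymm
          · obtain ⟨v, hv, hopt⟩ := wList_exists_opt w ((VL ∪ VR)ᶜ) hSne
            refine le_trans (Finset.inf'_le _ (Finset.mem_attach _ ⟨v, hv⟩)) ?_
            rw [hval ⟨v, hv⟩]
            simp only
            linarith
          · apply Finset.le_inf'
            intro v hv
            rw [hval v]
            have := wList_move_le w ((VL ∪ VR)ᶜ) v.1 v.2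
            linarith

variable (G : SimpleGraph V) [DecidableRel G.Adj]

/-- Number of ordered adjacent pairs with first coordinate in `A`, second in `B`. -/
private def adjCount (A B : Finset V) : ℕ :=
  ∑ v ∈ A, ∑ u ∈ B, (if G.Adj v u then 1 else 0)

private lemma adjCount_comm (A B : Finset V) : adjCount G A B = adjCount G B A := by
  unfold adjCount
  rw [Finset.sum_comm]
  congr 1
  ext u
  congr 1
  ext v
  congr 1
  rw [G.adj_comm]

private lemma sum_degree_eq (A B : Finset V) (hd : Disjoint A B)
    (hu : A ∪ B = Finset.univ) :
    ∑ v ∈ A, G.degree v = adjCount G A A + adjCount G A B := by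
  unfold adjCount
  rw [← Finset.sum_add_distrib]
  apply Finset.sum_congr rfl
  intro v _
  have hdeg : G.degree v = ∑ u ∈ Finset.univ, (if G.Adj v u then (1:ℕ) else 0) := by
    rw [← Finset.card_filter, ← SimpleGraph.neighborFinset_eq_filter]
    rfl
  rw [hdeg, ← hu, Finset.sum_union hd]

/-- The induced subgraph on a vertex subset `A`, as a graph on `V`. -/
private def indGraph (A : Finset V) : SimpleGraph V where
  Adj u v := G.Adj u v ∧ u ∈ A ∧ v ∈ A
  symm := by
    constructor
    intro u v ⟨h, h1, h2⟩
    exact ⟨h.symm, h2, h1⟩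
  loopless := by
    constructor
    intro u ⟨h, _⟩
    exact G.loopless.irrefl u h

private instance (A : Finset V) : DecidableRel (indGraph G A).Adj := by
  intro u v
  unfold indGraph
  exact instDecidableAnd

private lemma adjCount_diag (A : Finset V) :
    adjCount G A A = 2 * ({e ∈ G.edgeSet | ∀ w ∈ e, w ∈ A} : Set (Sym2 V)).ncard := by
  have hset : ({e ∈ G.edgeSet | ∀ w ∈ e, w ∈ A} : Set (Sym2 V))
      = (indGraph G A).edgeSet := by
    ext e
    refine Sym2.ind (fun u v => ?_) e
    simp only [Set.mem_setOf_eq, SimpleGraph.mem_edgeSet, Sym2.mem_iff, indGraph]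
    constructor
    · rintro ⟨h, hall⟩
      exact ⟨h, hall u (Or.inl rfl), hall v (Or.inr rfl)⟩
    · rintro ⟨h, h1, h2⟩
      refine ⟨h, fun w hw => ?_⟩
      rcases hw with rfl | rfl
      · exact h1
      · exact h2
  rw [hset, ← SimpleGraph.coe_edgeFinset, Set.ncard_coe_finset,
    ← SimpleGraph.sum_degrees_eq_twice_card_edges]
  unfold adjCount
  have h1 : ∀ v u : V, (if (indGraph G A).Adj v u then (1:ℕ) else 0) =
      if v ∈ A then (if u ∈ A then (if G.Adj v u then 1 else 0) else 0) else 0 := by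
    intro v u
    by_cases hva : v ∈ A <;> by_cases hua : u ∈ A <;> by_cases hadj : G.Adj v u <;>
      simp [indGraph, hva, hua, hadj]
  have h2 : ∀ v : V, (indGraph G A).degree v =
      ∑ u ∈ Finset.univ, (if (indGraph G A).Adj v u then (1:ℕ) else 0) := by
    intro v
    rw [SimpleGraph.degree, SimpleGraph.neighborFinset_eq_filter, Finset.card_filter]
  rw [Finset.sum_congr rfl (fun v _ => h2 v)]
  simp_rw [h1]
  have h3 : ∀ v : V,
      (∑ u : V, if v ∈ A then (if u ∈ A then (if G.Adj v u then (1:ℕ) else 0) else 0)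
        else 0)
        = if v ∈ A then (∑ u : V, if u ∈ A then (if G.Adj v u then (1:ℕ) else 0) else 0)
          else 0 := by
    intro v
    split_ifs <;> simp
  rw [Finset.sum_congr rfl (fun v _ => h3 v), Finset.sum_ite_mem, Finset.univ_inter]
  apply Finset.sum_congr rfl
  intro v _
  rw [Finset.sum_ite_mem, Finset.univ_inter]

/-- On complete positions, the linear degree score is twice the Incidence score. -/
private lemma lin_eq_two_mmScore (A B : Finset V) (hd : Disjoint A B)
    (hu : A ∪ B = Finset.univ) :
    2 * mmScore G A B = linScore (fun v => (G.degree v : ℤ)) A B := by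
  have hA := sum_degree_eq G A B hd hu
  have hB := sum_degree_eq G B A hd.symm (by rwa [Finset.union_comm])
  have hc := adjCount_comm G A B
  have h2A := adjCount_diag G A
  have h2B := adjCount_diag G B
  unfold mmScore linScore
  have hcastA : (∑ v ∈ A, ((G.degree v : ℤ))) = ((∑ v ∈ A, G.degree v : ℕ) : ℤ) := by
    push_cast; rfl
  have hcastB : (∑ v ∈ B, ((G.degree v : ℤ))) = ((∑ v ∈ B, G.degree v : ℕ) : ℤ) := by
    push_cast; rfl
  rw [hcastA, hcastB, hA, hB, hc, h2A, h2B]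
  push_cast
  ring

end IncidenceAux

/-- The Maker-Maker Incidence value of a graph, Left moving first,
equals half the alternating sum of the decreasing degree sequence. -/
theorem makerMaker_incidence_value_eq_alternating_degree_sum
    {V : Type} [Fintype V] [DecidableEq V] (G : SimpleGraph V) [DecidableRel G.Adj]
    (e : Fin (Fintype.card V) ≃ V)
    (hmono : Antitone fun i => G.degree (e i)) :
    (LsMM G : ℚ) =
      (1 / 2) * ∑ i : Fin (Fintype.card V), (-1 : ℚ) ^ (i : ℕ) * (G.degree (e i) : ℚ) := by
  classical
  set w : V → ℤ := fun v => (G.degree v : ℤ) with hw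
  -- Step 1: the value of the doubled game equals the value of the linear game
  have hdouble : gameValue (fun A B => 2 * mmScore G A B) true (∅ : Finset V) ∅
      = 2 * gameValue (mmScore G) true ∅ ∅ :=
    gameValue_two_mul (mmScore G) _ true ∅ ∅ rfl
  have hcongr : gameValue (fun A B => 2 * mmScore G A B) true (∅ : Finset V) ∅
      = gameValue (linScore w) true ∅ ∅ :=
    gameValue_congr _ _ (fun A B hd hu => lin_eq_two_mmScore G A B hd hu) _ true ∅ ∅ rfl
      (by simp)
  have hcompl : ((∅ ∪ ∅ : Finset V))ᶜ = (Finset.univ : Finset V) := by simp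
  have hlin : gameValue (linScore w) true (∅ : Finset V) ∅
      = altSum (wList w (Finset.univ : Finset V)) := by
    rw [gameValue_lin w _ true ∅ ∅ rfl, hcompl]
    simp [linScore]
  -- Step 2: identify the sorted weight list with the given decreasing enumeration
  have hlist : wList w (Finset.univ : Finset V)
      = List.ofFn (fun i : Fin (Fintype.card V) => w (e i)) := by
    apply List.Perm.eq_of_pairwise' (wList_sorted w _)
    · rw [List.pairwise_ofFn]
      intro i j hij
      have h := hmono (le_of_lt hij)
      simp only [ge_iff_le, hw, Nat.cast_le]
      simpa using h
    · rw [← Multiset.coe_eq_coe, wList_coe]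
      have h1 : (Finset.univ : Finset V).val
          = ((Finset.univ : Finset (Fin (Fintype.card V))).map e.toEmbedding).val := by
        rw [Finset.univ_map_equiv_to_embedding]
      rw [h1, Finset.map_val, Multiset.map_map]
      rw [Fin.univ_def]
      show Multiset.map (w ∘ e) (↑(List.finRange (Fintype.card V)) : Multiset _) = _
      rw [show (List.ofFn fun i : Fin (Fintype.card V) => w (e i)) = (List.finRange (Fintype.card V)).map (w ∘ e)
        from List.ofFn_eq_map]
      rfl
  -- Step 3: the key integer identity
  have key : 2 * LsMM G = ∑ i : Fin (Fintype.card V), (-1 : ℤ) ^ (i : ℕ) * w (e i) := by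
    rw [LsMM, ← hdouble, hcongr, hlin, hlist, altSum_ofFn]
  -- Step 4: cast to ℚ
  have keyQ := congrArg (fun z : ℤ => (z : ℚ)) key
  simp only [hw] at keyQ
  push_cast at keyQ
  linarith [keyQ]
end

section
/- For the Maker-Maker scoring positional game on a finite hypergraph H, the optimal relative score with Left moving first satisfies 0 ≤ Ls(H) ≤ Δ(H), where Δ(H) is the maximum, over vertices v, of the number of hyperedges containing v. Moreover Rs(H) = −Ls(H). -/
private lemma my_sup'_attach {β : Type} (s : Finset β) (hn : s.Nonempty) (f : β → ℤ) :
    s.attach.sup' (Finset.attach_nonempty_iff.mpr hn) (fun x => f x.1) = s.sup' hn f := by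
  apply le_antisymm
  · apply Finset.sup'_le
    intro b _
    exact Finset.le_sup' f b.2
  · apply Finset.sup'_le
    intro b hb
    exact Finset.le_sup' (fun x : {x // x ∈ s} => f x.1) (Finset.mem_attach s ⟨b, hb⟩)

private lemma my_inf'_attach {β : Type} (s : Finset β) (hn : s.Nonempty) (f : β → ℤ) :
    s.attach.inf' (Finset.attach_nonempty_iff.mpr hn) (fun x => f x.1) = s.inf' hn f := by
  apply le_antisymm
  · apply Finset.le_inf'
    intro b hb
    exact Finset.inf'_le (fun x : {x // x ∈ s} => f x.1) (Finset.mem_attach s ⟨b, hb⟩)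
  · apply Finset.le_inf'
    intro b _
    exact Finset.inf'_le f b.2

lemma gameValue_leaf {V : Type} [Fintype V] [DecidableEq V]
    (score : Finset V → Finset V → ℤ) (t : Bool) (VL VR : Finset V)
    (h : (VL ∪ VR)ᶜ = (∅ : Finset V)) :
    gameValue score t VL VR = score VL VR := by
  rw [gameValue, dif_pos h]

lemma gameValue_true {V : Type} [Fintype V] [DecidableEq V]
    (score : Finset V → Finset V → ℤ) (VL VR : Finset V)
    (hn : ((VL ∪ VR)ᶜ : Finset V).Nonempty) :
    gameValue score true VL VR =
      ((VL ∪ VR)ᶜ).sup' hn (fun v => gameValue score false (insert v VL) VR) := by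
  rw [gameValue, dif_neg (Finset.nonempty_iff_ne_empty.mp hn)]
  simp only [if_true]
  exact my_sup'_attach _ hn (fun v => gameValue score false (insert v VL) VR)

lemma gameValue_false {V : Type} [Fintype V] [DecidableEq V]
    (score : Finset V → Finset V → ℤ) (VL VR : Finset V)
    (hn : ((VL ∪ VR)ᶜ : Finset V).Nonempty) :
    gameValue score false VL VR =
      ((VL ∪ VR)ᶜ).inf' hn (fun v => gameValue score true VL (insert v VR)) := by
  rw [gameValue, dif_neg (Finset.nonempty_iff_ne_empty.mp hn)]
  simp only [Bool.false_eq_true, if_false]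
  exact my_inf'_attach _ hn (fun v => gameValue score true VL (insert v VR))

private lemma my_inf'_mono {α : Type} (s : Finset α) (h : s.Nonempty) (f g : α → ℤ)
    (hfg : ∀ b ∈ s, f b ≤ g b) : s.inf' h f ≤ s.inf' h g := by
  apply Finset.le_inf'
  intro b hb
  exact le_trans (Finset.inf'_le f hb) (hfg b hb)

private lemma my_sup'_mono {α : Type} (s : Finset α) (h : s.Nonempty) (f g : α → ℤ)
    (hfg : ∀ b ∈ s, f b ≤ g b) : s.sup' h f ≤ s.sup' h g := by
  apply Finset.sup'_le
  intro b hb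
  exact le_trans (hfg b hb) (Finset.le_sup' g hb)

private lemma my_neg_sup' {α : Type} (s : Finset α) (h : s.Nonempty) (f : α → ℤ) :
    -(s.sup' h f) = s.inf' h (fun x => -f x) := by
  apply le_antisymm
  · apply Finset.le_inf'
    intro b hb
    exact neg_le_neg (Finset.le_sup' _ hb)
  · obtain ⟨a, ha, hfa⟩ := s.exists_mem_eq_sup' h f
    have h2 : s.inf' h (fun x => -f x) ≤ -f a := Finset.inf'_le (fun x => -f x) ha
    rw [hfa]; exact h2

private lemma my_neg_inf' {α : Type} (s : Finset α) (h : s.Nonempty) (f : α → ℤ) :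
    -(s.inf' h f) = s.sup' h (fun x => -f x) := by
  apply le_antisymm
  · obtain ⟨a, ha, hfa⟩ := s.exists_mem_eq_inf' h f
    have h2 : -f a ≤ s.sup' h (fun x => -f x) := Finset.le_sup' (fun x => -f x) ha
    rw [hfa]; exact h2
  · apply Finset.sup'_le
    intro b hb
    exact neg_le_neg (Finset.inf'_le _ hb)

private lemma my_sup'_add {α : Type} (s : Finset α) (h : s.Nonempty) (f : α → ℤ) (c : ℤ) :
    s.sup' h (fun x => f x + c) = s.sup' h f + c := by
  apply le_antisymm
  · apply Finset.sup'_le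
    intro b hb
    exact add_le_add_left (Finset.le_sup' f hb) c
  · obtain ⟨a, ha, hfa⟩ := s.exists_mem_eq_sup' h f
    have h2 : f a + c ≤ s.sup' h (fun x => f x + c) := Finset.le_sup' (fun x => f x + c) ha
    rw [hfa]; exact h2

private lemma my_inf'_add {α : Type} (s : Finset α) (h : s.Nonempty) (f : α → ℤ) (c : ℤ) :
    s.inf' h (fun x => f x + c) = s.inf' h f + c := by
  apply le_antisymm
  · obtain ⟨a, ha, hfa⟩ := s.exists_mem_eq_inf' h f
    have h2 : s.inf' h (fun x => f x + c) ≤ f a + c := Finset.inf'_le (fun x => f x + c) ha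
    rw [hfa]; exact h2
  · apply Finset.le_inf'
    intro b hb
    exact add_le_add_left (Finset.inf'_le f hb) c

theorem gameValue_antisymm {V : Type} [Fintype V] [DecidableEq V]
    (score : Finset V → Finset V → ℤ) (hs : ∀ A B, score A B = - score B A)
    (t : Bool) (VL VR : Finset V) :
    gameValue score t VL VR = - gameValue score (!t) VR VL := by
  have hu : ((VR ∪ VL : Finset V))ᶜ = (VL ∪ VR)ᶜ := by rw [Finset.union_comm]
  by_cases h : (VL ∪ VR)ᶜ = (∅ : Finset V)
  · rw [gameValue_leaf score t VL VR h, gameValue_leaf score (!t) VR VL (by rw [hu]; exact h)]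
    exact hs VL VR
  · have hn : ((VL ∪ VR)ᶜ : Finset V).Nonempty := Finset.nonempty_iff_ne_empty.mpr h
    have hn' : ((VR ∪ VL)ᶜ : Finset V).Nonempty := by rw [hu]; exact hn
    cases t
    · simp only [Bool.not_false]
      rw [gameValue_false score VL VR hn, gameValue_true score VR VL hn', my_neg_sup']
      exact Finset.inf'_congr hn hu.symm
        (fun v hv => gameValue_antisymm score hs true VL (insert v VR))
    · simp only [Bool.not_true]
      rw [gameValue_true score VL VR hn, gameValue_false score VR VL hn', my_neg_inf']
      exact Finset.sup'_congr hn hu.symm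
        (fun v hv => gameValue_antisymm score hs false (insert v VL) VR)
termination_by ((VL ∪ VR)ᶜ).card
decreasing_by
  all_goals
    · first
        | rw [Finset.union_insert, Finset.compl_insert]
        | rw [Finset.insert_union, Finset.compl_insert]
      apply Finset.card_erase_lt_of_mem
      first
        | assumption
        | · simp only [Finset.mem_compl, Finset.mem_union, Finset.mem_insert] at hw ⊢
            tauto

theorem gameValue_add_const {V : Type} [Fintype V] [DecidableEq V]
    (score : Finset V → Finset V → ℤ) (c : ℤ) (t : Bool) (VL VR : Finset V) :
    gameValue (fun A B => score A B + c) t VL VR = gameValue score t VL VR + c := by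
  by_cases h : (VL ∪ VR)ᶜ = (∅ : Finset V)
  · rw [gameValue_leaf _ t VL VR h, gameValue_leaf score t VL VR h]
  · have hn : ((VL ∪ VR)ᶜ : Finset V).Nonempty := Finset.nonempty_iff_ne_empty.mpr h
    cases t
    · rw [gameValue_false _ VL VR hn, gameValue_false score VL VR hn, ← my_inf'_add]
      exact Finset.inf'_congr hn rfl
        (fun v hv => gameValue_add_const score c true VL (insert v VR))
    · rw [gameValue_true _ VL VR hn, gameValue_true score VL VR hn, ← my_sup'_add]
      exact Finset.sup'_congr hn rfl
        (fun v hv => gameValue_add_const score c false (insert v VL) VR)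
termination_by ((VL ∪ VR)ᶜ).card
decreasing_by
  all_goals
    · first
        | rw [Finset.union_insert, Finset.compl_insert]
        | rw [Finset.insert_union, Finset.compl_insert]
      apply Finset.card_erase_lt_of_mem
      first
        | assumption
        | · simp only [Finset.mem_compl, Finset.mem_union, Finset.mem_insert] at hw ⊢
            tauto

theorem gameValue_mono {V : Type} [Fintype V] [DecidableEq V]
    (score1 score2 : Finset V → Finset V → ℤ) (Inv : Finset V → Finset V → Prop)
    (hInv : ∀ A B w, w ∈ (A ∪ B)ᶜ → Inv A B → Inv (insert w A) B ∧ Inv A (insert w B))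
    (hle : ∀ A B, Inv A B → score1 A B ≤ score2 A B) (t : Bool) (VL VR : Finset V)
    (hI : Inv VL VR) :
    gameValue score1 t VL VR ≤ gameValue score2 t VL VR := by
  by_cases h : (VL ∪ VR)ᶜ = (∅ : Finset V)
  · rw [gameValue_leaf score1 t VL VR h, gameValue_leaf score2 t VL VR h]
    exact hle VL VR hI
  · have hn : ((VL ∪ VR)ᶜ : Finset V).Nonempty := Finset.nonempty_iff_ne_empty.mpr h
    cases t
    · rw [gameValue_false score1 VL VR hn, gameValue_false score2 VL VR hn]
      apply my_inf'_mono
      intro v hv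
      exact gameValue_mono score1 score2 Inv hInv hle true VL (insert v VR)
        (hInv VL VR v hv hI).2
    · rw [gameValue_true score1 VL VR hn, gameValue_true score2 VL VR hn]
      apply my_sup'_mono
      intro v hv
      exact gameValue_mono score1 score2 Inv hInv hle false (insert v VL) VR
        (hInv VL VR v hv hI).1
termination_by ((VL ∪ VR)ᶜ).card
decreasing_by
  all_goals
    · first
        | rw [Finset.union_insert, Finset.compl_insert]
        | rw [Finset.insert_union, Finset.compl_insert]
      apply Finset.card_erase_lt_of_mem
      first
        | assumption
        | · simp only [Finset.mem_compl, Finset.mem_union, Finset.mem_insert] at hw ⊢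
            tauto

theorem gameValue_irrel {V : Type} [Fintype V] [DecidableEq V]
    (score : Finset V → Finset V → ℤ) (v : V)
    (hr : ∀ A B, score (insert v A) B = score A (insert v B)) (t : Bool) (VL VR : Finset V) :
    gameValue score t (insert v VL) VR = gameValue score t VL (insert v VR) := by
  have hu : ((VL ∪ insert v VR : Finset V))ᶜ = (insert v VL ∪ VR)ᶜ := by
    rw [Finset.union_insert, Finset.insert_union]
  by_cases h : (insert v VL ∪ VR)ᶜ = (∅ : Finset V)
  · rw [gameValue_leaf score t _ VR h, gameValue_leaf score t VL _ (by rw [hu]; exact h)]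
    exact hr VL VR
  · have hn : ((insert v VL ∪ VR)ᶜ : Finset V).Nonempty := Finset.nonempty_iff_ne_empty.mpr h
    have hn' : ((VL ∪ insert v VR)ᶜ : Finset V).Nonempty := by rw [hu]; exact hn
    cases t
    · rw [gameValue_false score _ VR hn, gameValue_false score VL _ hn']
      apply Finset.inf'_congr hn hu.symm
      intro w hw
      rw [gameValue_irrel score v hr true VL (insert w VR), Finset.insert_comm]
    · rw [gameValue_true score _ VR hn, gameValue_true score VL _ hn']
      apply Finset.sup'_congr hn hu.symm
      intro w hw
      rw [Finset.insert_comm, gameValue_irrel score v hr false (insert w VL) VR]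
termination_by ((VL ∪ VR)ᶜ).card
decreasing_by
  all_goals
    · first
        | rw [Finset.union_insert, Finset.compl_insert]
        | rw [Finset.insert_union, Finset.compl_insert]
      apply Finset.card_erase_lt_of_mem
      first
        | assumption
        | · simp only [Finset.mem_compl, Finset.mem_union, Finset.mem_insert] at hw ⊢
            tauto

theorem gameValue_XB {V : Type} [Fintype V] [DecidableEq V]
    (score : Finset V → Finset V → ℤ)
    (hs2 : ∀ A B w, score A (insert w B) ≤ score (insert w A) B) :
    ∀ (n : ℕ) (VL VR : Finset V), ((VL ∪ VR)ᶜ).card ≤ n →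
      (∀ (t : Bool) (v : V), v ∈ (VL ∪ VR)ᶜ →
          gameValue score t VL VR ≤ gameValue score t (insert v VL) VR)
      ∧ gameValue score false VL VR ≤ gameValue score true VL VR := by
  intro n
  induction n with
  | zero =>
    intro VL VR hcard
    have h : (VL ∪ VR)ᶜ = (∅ : Finset V) := Finset.card_eq_zero.mp (Nat.le_zero.mp hcard)
    constructor
    · intro t v hv
      rw [h] at hv
      exact absurd hv (Finset.notMem_empty v)
    · rw [gameValue_leaf score false VL VR h, gameValue_leaf score true VL VR h]
  | succ n ih =>
    intro VL VR hcard
    have hX : ∀ (t : Bool) (v : V), v ∈ (VL ∪ VR)ᶜ →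
        gameValue score t VL VR ≤ gameValue score t (insert v VL) VR := by
      intro t v hv
      have hn : ((VL ∪ VR)ᶜ : Finset V).Nonempty := ⟨v, hv⟩
      have hT : (insert v VL ∪ VR)ᶜ = ((VL ∪ VR)ᶜ).erase v := by
        rw [Finset.insert_union, Finset.compl_insert]
      have hTcard : ((insert v VL ∪ VR)ᶜ).card ≤ n := by
        rw [hT]
        have h1 : (((VL ∪ VR)ᶜ).erase v).card < ((VL ∪ VR)ᶜ).card :=
          Finset.card_erase_lt_of_mem hv
        omega
      cases t
      · -- t = false
        by_cases hT0 : (insert v VL ∪ VR)ᶜ = (∅ : Finset V)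
        · rw [gameValue_false score VL VR hn, gameValue_leaf score false _ VR hT0]
          calc ((VL ∪ VR)ᶜ).inf' hn (fun w => gameValue score true VL (insert w VR))
              ≤ gameValue score true VL (insert v VR) :=
                Finset.inf'_le (fun w => gameValue score true VL (insert w VR)) hv
            _ = score VL (insert v VR) := by
                apply gameValue_leaf
                rw [Finset.union_insert]
                rw [Finset.insert_union] at hT0
                exact hT0
            _ ≤ score (insert v VL) VR := hs2 VL VR v
        · have hTn : ((insert v VL ∪ VR)ᶜ : Finset V).Nonempty :=
            Finset.nonempty_iff_ne_empty.mpr hT0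
          rw [gameValue_false score VL VR hn, gameValue_false score _ VR hTn]
          apply Finset.le_inf'
          intro w hw
          have hw' : w ∈ (VL ∪ VR)ᶜ := by
            rw [hT] at hw
            exact Finset.mem_of_mem_erase hw
          have hwv : w ≠ v := by
            rw [hT] at hw
            exact Finset.ne_of_mem_erase hw
          have hvw : v ∈ (VL ∪ insert w VR)ᶜ := by
            simp only [Finset.mem_compl, Finset.mem_union, Finset.mem_insert] at hv ⊢
            push_neg at hv ⊢
            exact ⟨hv.1, fun hvw' => (hwv hvw'.symm), hv.2⟩
          have hc : ((VL ∪ insert w VR)ᶜ).card ≤ n := by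
            rw [Finset.union_insert, Finset.compl_insert]
            have h1 : (((VL ∪ VR)ᶜ).erase w).card < ((VL ∪ VR)ᶜ).card :=
              Finset.card_erase_lt_of_mem hw'
            omega
          calc ((VL ∪ VR)ᶜ).inf' hn (fun w => gameValue score true VL (insert w VR))
              ≤ gameValue score true VL (insert w VR) :=
                Finset.inf'_le (fun w => gameValue score true VL (insert w VR)) hw'
            _ ≤ gameValue score true (insert v VL) (insert w VR) :=
                (ih VL (insert w VR) hc).1 true v hvw
      · -- t = true
        rw [gameValue_true score VL VR hn]
        apply Finset.sup'_le
        intro w hw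
        by_cases hwv : w = v
        · subst hwv
          exact (ih (insert w VL) VR hTcard).2
        · have hvw : v ∈ (insert w VL ∪ VR)ᶜ := by
            simp only [Finset.mem_compl, Finset.mem_union, Finset.mem_insert] at hv hw ⊢
            push_neg at hv ⊢
            exact ⟨⟨fun h' => hwv h'.symm, hv.1⟩, hv.2⟩
          have hc : ((insert w VL ∪ VR)ᶜ).card ≤ n := by
            rw [Finset.insert_union, Finset.compl_insert]
            have h1 : (((VL ∪ VR)ᶜ).erase w).card < ((VL ∪ VR)ᶜ).card :=
              Finset.card_erase_lt_of_mem hw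
            omega
          have hTn : ((insert v VL ∪ VR)ᶜ : Finset V).Nonempty := by
            rw [hT]
            exact ⟨w, Finset.mem_erase.mpr ⟨hwv, hw⟩⟩
          calc gameValue score false (insert w VL) VR
              ≤ gameValue score false (insert v (insert w VL)) VR :=
                (ih (insert w VL) VR hc).1 false v hvw
            _ = gameValue score false (insert w (insert v VL)) VR := by
                rw [Finset.insert_comm]
            _ ≤ gameValue score true (insert v VL) VR := by
                rw [gameValue_true score (insert v VL) VR hTn]
                exact Finset.le_sup'
                  (fun w => gameValue score false (insert w (insert v VL)) VR)
                  (by rw [hT]; exact Finset.mem_erase.mpr ⟨hwv, hw⟩)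
    have hB : gameValue score false VL VR ≤ gameValue score true VL VR := by
      by_cases h : (VL ∪ VR)ᶜ = (∅ : Finset V)
      · rw [gameValue_leaf score false VL VR h, gameValue_leaf score true VL VR h]
      · obtain ⟨v, hv⟩ := Finset.nonempty_iff_ne_empty.mpr h
        calc gameValue score false VL VR
            ≤ gameValue score false (insert v VL) VR := hX false v hv
          _ ≤ ((VL ∪ VR)ᶜ).sup' ⟨v, hv⟩ (fun w => gameValue score false (insert w VL) VR) :=
              Finset.le_sup' (fun w => gameValue score false (insert w VL) VR) hv
          _ = gameValue score true VL VR := (gameValue_true score VL VR ⟨v, hv⟩).symm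
    exact ⟨hX, hB⟩

/-- For the Maker-Maker scoring positional game on a finite hypergraph,
`0 ≤ Ls(H) ≤ Δ(H)` and `Rs(H) = -Ls(H)`. -/
theorem makerMaker_scoring_game_bounds {V : Type} [Fintype V] [DecidableEq V]
    (E : Finset (Finset V)) :
    0 ≤ gameValue (mmScoreH E) true ∅ ∅ ∧
    gameValue (mmScoreH E) true ∅ ∅ ≤
      ((Finset.univ.sup (fun v : V => (E.filter (fun e => v ∈ e)).card) : ℕ) : ℤ) ∧
    gameValue (mmScoreH E) false ∅ ∅ = - gameValue (mmScoreH E) true ∅ ∅ := by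
  have hs : ∀ (E' : Finset (Finset V)) (A B : Finset V), mmScoreH E' A B = - mmScoreH E' B A := by
    intro E' A B
    unfold mmScoreH
    ring
  have hs2 : ∀ (E' : Finset (Finset V)) (A B : Finset V) (w : V),
      mmScoreH E' A (insert w B) ≤ mmScoreH E' (insert w A) B := by
    intro E' A B w
    unfold mmScoreH
    have h1 : (E'.filter (fun e => e ⊆ A)).card ≤ (E'.filter (fun e => e ⊆ insert w A)).card := by
      apply Finset.card_le_card
      intro e he
      rw [Finset.mem_filter] at he ⊢
      exact ⟨he.1, he.2.trans (Finset.subset_insert w A)⟩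
    have h2 : (E'.filter (fun e => e ⊆ B)).card ≤ (E'.filter (fun e => e ⊆ insert w B)).card := by
      apply Finset.card_le_card
      intro e he
      rw [Finset.mem_filter] at he ⊢
      exact ⟨he.1, he.2.trans (Finset.subset_insert w B)⟩
    omega
  -- Part 3 : antisymmetry
  have h3 : gameValue (mmScoreH E) false ∅ ∅ = - gameValue (mmScoreH E) true ∅ ∅ := by
    have := gameValue_antisymm (mmScoreH E) (hs E) false ∅ ∅
    simpa using this
  -- Part 1 : 0 ≤ Ls
  have hB := (gameValue_XB (mmScoreH E) (hs2 E) (((∅ ∪ ∅ : Finset V))ᶜ).card ∅ ∅ le_rfl).2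
  have h1 : 0 ≤ gameValue (mmScoreH E) true ∅ ∅ := by linarith [hB, h3.le]
  refine ⟨h1, ?_, h3⟩
  -- Part 2 : Ls ≤ Δ
  by_cases h : ((∅ ∪ ∅ : Finset V))ᶜ = (∅ : Finset V)
  · rw [gameValue_leaf _ true ∅ ∅ h]
    unfold mmScoreH
    simp
  · have hn : (((∅ ∪ ∅ : Finset V))ᶜ : Finset V).Nonempty := Finset.nonempty_iff_ne_empty.mpr h
    rw [gameValue_true _ ∅ ∅ hn]
    apply Finset.sup'_le
    intro v _
    set E' : Finset (Finset V) := E.filter (fun e => v ∉ e) with hE'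
    set deg : ℕ := (E.filter (fun e => v ∈ e)).card with hdeg
    have hvE' : ∀ e ∈ E', v ∉ e := by
      intro e he
      exact (Finset.mem_filter.mp he).2
    -- irrelevance of v for E'
    have hr : ∀ A B : Finset V, mmScoreH E' (insert v A) B = mmScoreH E' A (insert v B) := by
      have hfilt : ∀ C : Finset V,
          E'.filter (fun e => e ⊆ insert v C) = E'.filter (fun e => e ⊆ C) := by
        intro C
        apply Finset.filter_congr
        intro e he
        constructor
        · intro hsub x hx
          rcases Finset.mem_insert.mp (hsub hx) with h' | h'
          · exact absurd (h' ▸ hx) (hvE' e he)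
          · exact h'
        · intro hsub
          exact hsub.trans (Finset.subset_insert v C)
      intro A B
      unfold mmScoreH
      rw [hfilt A, hfilt B]
    -- step 1 : the E' game from (∅, {v}) with Left to move is nonnegative
    have hstep1 : 0 ≤ gameValue (mmScoreH E') true ∅ (insert v ∅) := by
      have hBE' := (gameValue_XB (mmScoreH E') (hs2 E')
        (((∅ ∪ insert v ∅ : Finset V))ᶜ).card ∅ (insert v ∅) le_rfl).2
      have hIrr := gameValue_irrel (mmScoreH E') v hr false ∅ ∅
      have hAs : gameValue (mmScoreH E') false (insert v ∅) ∅
          = - gameValue (mmScoreH E') true ∅ (insert v ∅) := by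
        have := gameValue_antisymm (mmScoreH E') (hs E') false (insert v ∅) ∅
        simpa using this
      rw [hIrr] at hAs
      linarith [hBE', hAs.symm.le, hAs.le]
    -- step 2 : domination
    have hInv : ∀ (A B : Finset V) (w : V), w ∈ (A ∪ B)ᶜ → (v ∈ B ∧ v ∉ A) →
        (v ∈ B ∧ v ∉ insert w A) ∧ (v ∈ insert w B ∧ v ∉ A) := by
      intro A B w hw hI
      have hwv : w ≠ v := by
        intro h'
        subst h'
        simp only [Finset.mem_compl, Finset.mem_union] at hw
        push_neg at hw
        exact hw.2 hI.1
      refine ⟨⟨hI.1, ?_⟩, Finset.mem_insert_of_mem hI.1, hI.2⟩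
      simp only [Finset.mem_insert]
      push_neg
      exact ⟨fun h' => hwv h'.symm, hI.2⟩
    have hle : ∀ A B : Finset V, (v ∈ B ∧ v ∉ A) →
        mmScoreH E' A B + (-(deg : ℤ)) ≤ mmScoreH E A B := by
      intro A B hI
      have hA' : E.filter (fun e => e ⊆ A) = E.filter (fun e => v ∉ e ∧ e ⊆ A) := by
        apply Finset.filter_congr
        intro e _
        constructor
        · intro hsub
          exact ⟨fun hve => hI.2 (hsub hve), hsub⟩
        · exact And.right
      have hA : (E.filter (fun e => e ⊆ A)).card = (E'.filter (fun e => e ⊆ A)).card := by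
        rw [hE', Finset.filter_filter, hA']
      have hsubB : E.filter (fun e => e ⊆ B) ⊆
          (E'.filter (fun e => e ⊆ B)) ∪ (E.filter (fun e => v ∈ e)) := by
        intro e he
        rw [Finset.mem_filter] at he
        by_cases hve : v ∈ e
        · exact Finset.mem_union_right _ (Finset.mem_filter.mpr ⟨he.1, hve⟩)
        · exact Finset.mem_union_left _
            (Finset.mem_filter.mpr ⟨Finset.mem_filter.mpr ⟨he.1, hve⟩, he.2⟩)
      have hBcard : (E.filter (fun e => e ⊆ B)).card ≤
          (E'.filter (fun e => e ⊆ B)).card + deg :=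
        (Finset.card_le_card hsubB).trans (Finset.card_union_le _ _)
      unfold mmScoreH
      omega
    have hmono := gameValue_mono (fun A B => mmScoreH E' A B + (-(deg : ℤ))) (mmScoreH E)
      (fun A B => v ∈ B ∧ v ∉ A) hInv hle true ∅ (insert v ∅)
      ⟨Finset.mem_insert_self v ∅, Finset.notMem_empty v⟩
    have hshift := gameValue_add_const (mmScoreH E') (-(deg : ℤ)) true ∅ (insert v ∅)
    have hAsE : gameValue (mmScoreH E) false (insert v ∅) ∅
        = - gameValue (mmScoreH E) true ∅ (insert v ∅) := by
      have := gameValue_antisymm (mmScoreH E) (hs E) false (insert v ∅) ∅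
      simpa using this
    have hdegle : (deg : ℤ) ≤
        ((Finset.univ.sup (fun v : V => (E.filter (fun e => v ∈ e)).card) : ℕ) : ℤ) := by
      exact_mod_cast Finset.le_sup (f := fun v : V => (E.filter (fun e => v ∈ e)).card)
        (Finset.mem_univ v)
    rw [hshift] at hmono
    linarith [hstep1, hmono, hAsE.le, hdegle]
end

section
/- In the Maker-Breaker scoring positional game on a finite hypergraph H = (V,E) with |V| = n, we have Ls(H) ≥ Σ_{e∈E} 2^{−|e|} − n·ℓ(H)/8 and Rs(H) ≤ Σ_{e∈E} 2^{−|e|}, where ℓ(H) is the maximum number of hyperedges containing any fixed pair of distinct vertices. -/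
section GameValue
variable {V : Type} [Fintype V] [DecidableEq V]

theorem gameValue_of_full (score : Finset V → Finset V → ℤ) (turn : Bool)
    {VL VR : Finset V} (h : (VL ∪ VR)ᶜ = (∅ : Finset V)) :
    gameValue score turn VL VR = score VL VR := by
  rw [gameValue, dif_pos h]

theorem gameValue_false_of_ne (score : Finset V → Finset V → ℤ)
    {VL VR : Finset V} (h : ¬ (VL ∪ VR)ᶜ = (∅ : Finset V)) :
    gameValue score false VL VR = ((VL ∪ VR)ᶜ).attach.inf'
      (Finset.attach_nonempty_iff.mpr (Finset.nonempty_iff_ne_empty.mpr h))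
      (fun v => gameValue score true VL (insert v.1 VR)) := by
  rw [gameValue, dif_neg h]
  rfl

theorem gameValue_true_of_ne (score : Finset V → Finset V → ℤ)
    {VL VR : Finset V} (h : ¬ (VL ∪ VR)ᶜ = (∅ : Finset V)) :
    gameValue score true VL VR = ((VL ∪ VR)ᶜ).attach.sup'
      (Finset.attach_nonempty_iff.mpr (Finset.nonempty_iff_ne_empty.mpr h))
      (fun v => gameValue score false (insert v.1 VL) VR) := by
  rw [gameValue, dif_neg h]
  rfl

end GameValue

section Invariant
variable {V : Type} [Fintype V] [DecidableEq V]

theorem gameValue_le_of_potential (score : Finset V → Finset V → ℤ)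
    (Φ : Finset V → Finset V → ℚ)
    (hA : ∀ VL VR : Finset V, Disjoint VL VR → (VL ∪ VR)ᶜ = ∅ → (score VL VR : ℚ) ≤ Φ VL VR)
    (hB : ∀ VL VR : Finset V, Disjoint VL VR → (VL ∪ VR)ᶜ ≠ ∅ →
      ∃ v ∈ (VL ∪ VR)ᶜ, Φ VL (insert v VR) ≤ Φ VL VR ∧
        ∀ u ∈ (VL ∪ insert v VR)ᶜ, Φ (insert u VL) (insert v VR) ≤ Φ VL VR) :
    ∀ (n : ℕ) (VL VR : Finset V), ((VL ∪ VR)ᶜ).card ≤ n → Disjoint VL VR →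
      (gameValue score false VL VR : ℚ) ≤ Φ VL VR := by
  intro n
  induction n with
  | zero =>
    intro VL VR hc hd
    have h : (VL ∪ VR)ᶜ = ∅ := Finset.card_eq_zero.mp (Nat.le_zero.mp hc)
    rw [gameValue_of_full _ _ h]; exact hA _ _ hd h
  | succ n ih =>
    intro VL VR hc hd
    by_cases h : (VL ∪ VR)ᶜ = (∅ : Finset V)
    · rw [gameValue_of_full _ _ h]; exact hA _ _ hd h
    · obtain ⟨v, hv, h1, h2⟩ := hB VL VR hd h
      rw [gameValue_false_of_ne _ h]
      have hvnu : v ∉ VL ∪ VR := Finset.mem_compl.mp hv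
      have hdisj' : Disjoint VL (insert v VR) := by
        rw [Finset.disjoint_insert_right]
        exact ⟨fun hvL => hvnu (Finset.mem_union_left _ hvL), hd⟩
      have hle : (((VL ∪ VR)ᶜ).attach.inf'
          (Finset.attach_nonempty_iff.mpr (Finset.nonempty_iff_ne_empty.mpr h))
          (fun w => gameValue score true VL (insert w.1 VR)) : ℤ)
          ≤ gameValue score true VL (insert v VR) :=
        Finset.inf'_le _ (Finset.mem_attach _ ⟨v, hv⟩)
      refine le_trans (Int.cast_le.mpr hle) ?_
      by_cases h' : (VL ∪ insert v VR)ᶜ = (∅ : Finset V)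
      · rw [gameValue_of_full _ _ h']
        exact le_trans (hA _ _ hdisj' h') h1
      · rw [gameValue_true_of_ne _ h']
        obtain ⟨u, _, hequ⟩ := Finset.exists_mem_eq_sup'
          (Finset.attach_nonempty_iff.mpr (Finset.nonempty_iff_ne_empty.mpr h'))
          (fun w : {x // x ∈ (VL ∪ insert v VR)ᶜ} =>
            gameValue score false (insert w.1 VL) (insert v VR))
        rw [hequ]
        have hu : u.1 ∈ (VL ∪ insert v VR)ᶜ := u.2
        have hsub : (insert u.1 VL ∪ insert v VR)ᶜ ⊆ ((VL ∪ VR)ᶜ).erase v := by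
          intro x hx
          rw [Finset.mem_compl] at hx
          simp only [Finset.mem_union, Finset.mem_insert, not_or] at hx
          rw [Finset.mem_erase, Finset.mem_compl]
          exact ⟨hx.2.1, by simp [Finset.mem_union, hx.1.2, hx.2.2]⟩
        have hcard : ((insert u.1 VL ∪ insert v VR)ᶜ).card ≤ n := by
          calc ((insert u.1 VL ∪ insert v VR)ᶜ).card
              ≤ (((VL ∪ VR)ᶜ).erase v).card := Finset.card_le_card hsub
            _ = ((VL ∪ VR)ᶜ).card - 1 := Finset.card_erase_of_mem hv
            _ ≤ n := by omega
        have hdisj'' : Disjoint (insert u.1 VL) (insert v VR) := by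
          rw [Finset.disjoint_insert_left]
          exact ⟨Finset.mem_compl.mp hu ∘ Finset.mem_union_right _, hdisj'⟩
        exact le_trans (ih _ _ hcard hdisj'') (h2 u.1 hu)

theorem le_gameValue_of_potential (score : Finset V → Finset V → ℤ)
    (Φ : Finset V → Finset V → ℚ)
    (hA : ∀ VL VR : Finset V, Disjoint VL VR → (VL ∪ VR)ᶜ = ∅ → Φ VL VR ≤ (score VL VR : ℚ))
    (hB : ∀ VL VR : Finset V, Disjoint VL VR → (VL ∪ VR)ᶜ ≠ ∅ →
      ∃ u ∈ (VL ∪ VR)ᶜ, Φ VL VR ≤ Φ (insert u VL) VR ∧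
        ∀ v ∈ (insert u VL ∪ VR)ᶜ, Φ VL VR ≤ Φ (insert u VL) (insert v VR)) :
    ∀ (n : ℕ) (VL VR : Finset V), ((VL ∪ VR)ᶜ).card ≤ n → Disjoint VL VR →
      Φ VL VR ≤ (gameValue score true VL VR : ℚ) := by
  intro n
  induction n with
  | zero =>
    intro VL VR hc hd
    have h : (VL ∪ VR)ᶜ = ∅ := Finset.card_eq_zero.mp (Nat.le_zero.mp hc)
    rw [gameValue_of_full _ _ h]; exact hA _ _ hd h
  | succ n ih =>
    intro VL VR hc hd
    by_cases h : (VL ∪ VR)ᶜ = (∅ : Finset V)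
    · rw [gameValue_of_full _ _ h]; exact hA _ _ hd h
    · obtain ⟨u, hu, h1, h2⟩ := hB VL VR hd h
      rw [gameValue_true_of_ne _ h]
      have hunu : u ∉ VL ∪ VR := Finset.mem_compl.mp hu
      have hdisj' : Disjoint (insert u VL) VR := by
        rw [Finset.disjoint_insert_left]
        exact ⟨fun huR => hunu (Finset.mem_union_right _ huR), hd⟩
      have hle : gameValue score false (insert u VL) VR ≤
          (((VL ∪ VR)ᶜ).attach.sup'
          (Finset.attach_nonempty_iff.mpr (Finset.nonempty_iff_ne_empty.mpr h))
          (fun w => gameValue score false (insert w.1 VL) VR) : ℤ) :=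
        Finset.le_sup' (fun w : {x // x ∈ (VL ∪ VR)ᶜ} =>
          gameValue score false (insert w.1 VL) VR) (Finset.mem_attach _ ⟨u, hu⟩)
      refine le_trans ?_ (Int.cast_le.mpr hle)
      by_cases h' : (insert u VL ∪ VR)ᶜ = (∅ : Finset V)
      · rw [gameValue_of_full _ _ h']
        exact le_trans h1 (hA _ _ hdisj' h')
      · rw [gameValue_false_of_ne _ h']
        obtain ⟨v, _, heqv⟩ := Finset.exists_mem_eq_inf'
          (Finset.attach_nonempty_iff.mpr (Finset.nonempty_iff_ne_empty.mpr h'))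
          (fun w : {x // x ∈ (insert u VL ∪ VR)ᶜ} =>
            gameValue score true (insert u VL) (insert w.1 VR))
        rw [heqv]
        have hv : v.1 ∈ (insert u VL ∪ VR)ᶜ := v.2
        have hsub : (insert u VL ∪ insert v.1 VR)ᶜ ⊆ ((VL ∪ VR)ᶜ).erase u := by
          intro x hx
          rw [Finset.mem_compl] at hx
          simp only [Finset.mem_union, Finset.mem_insert, not_or] at hx
          rw [Finset.mem_erase, Finset.mem_compl]
          exact ⟨hx.1.1, by simp [Finset.mem_union, hx.1.2, hx.2.2]⟩
        have hcard : ((insert u VL ∪ insert v.1 VR)ᶜ).card ≤ n := by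
          calc ((insert u VL ∪ insert v.1 VR)ᶜ).card
              ≤ (((VL ∪ VR)ᶜ).erase u).card := Finset.card_le_card hsub
            _ = ((VL ∪ VR)ᶜ).card - 1 := Finset.card_erase_of_mem hu
            _ ≤ n := by omega
        have hdisj'' : Disjoint (insert u VL) (insert v.1 VR) := by
          rw [Finset.disjoint_insert_right]
          exact ⟨Finset.mem_compl.mp hv ∘ Finset.mem_union_left _, hdisj'⟩
        exact le_trans (h2 v.1 hv) (ih _ _ hcard hdisj'')

end Invariant

section Potential
variable {V : Type} [Fintype V] [DecidableEq V]

/-- Erdős–Selfridge potential. -/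
def pot (E : Finset (Finset V)) (VL VR : Finset V) : ℚ :=
  ∑ e ∈ E.filter (fun e => e ∩ VR = ∅), (2:ℚ) ^ (-((e \ VL).card : ℤ))

/-- Weight of a vertex. -/
def wt (E : Finset (Finset V)) (VL VR : Finset V) (x : V) : ℚ :=
  ∑ e ∈ E.filter (fun e => e ∩ VR = ∅ ∧ x ∈ e), (2:ℚ) ^ (-((e \ VL).card : ℤ))

theorem wt_nonneg (E : Finset (Finset V)) (VL VR : Finset V) (x : V) :
    0 ≤ wt E VL VR x :=
  Finset.sum_nonneg fun e _ => by positivity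

theorem wt_mono (E : Finset (Finset V)) (VL : Finset V) {VR VR' : Finset V}
    (h : VR ⊆ VR') (x : V) : wt E VL VR' x ≤ wt E VL VR x := by
  apply Finset.sum_le_sum_of_subset_of_nonneg
  · intro e he
    rw [Finset.mem_filter] at he ⊢
    refine ⟨he.1, ?_, he.2.2⟩
    have hss : e ∩ VR ⊆ e ∩ VR' := Finset.inter_subset_inter (Finset.Subset.refl e) h
    rw [he.2.1] at hss
    exact Finset.subset_empty.mp hss
  · intro e _ _; positivity

theorem pot_insert_right (E : Finset (Finset V)) (VL VR : Finset V) (v : V) :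
    pot E VL (insert v VR) = pot E VL VR - wt E VL VR v := by
  unfold pot wt
  rw [← Finset.sum_filter_add_sum_filter_not (E.filter (fun e => e ∩ VR = ∅))
      (fun e => v ∈ e) (fun e => (2:ℚ) ^ (-((e \ VL).card : ℤ)))]
  rw [Finset.filter_filter, Finset.filter_filter]
  have hsets : E.filter (fun e => e ∩ insert v VR = ∅)
      = E.filter (fun e => e ∩ VR = ∅ ∧ ¬ v ∈ e) := by
    apply Finset.filter_congr
    intro e _
    simp only [Finset.eq_empty_iff_forall_notMem, Finset.mem_inter, Finset.mem_insert]
    constructor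
    · intro h
      exact ⟨fun x hx => (h x) ⟨hx.1, Or.inr hx.2⟩, fun hv => (h v) ⟨hv, Or.inl rfl⟩⟩
    · rintro ⟨h1, h2⟩ x ⟨hx1, hx2 | hx3⟩
      · exact h2 (hx2 ▸ hx1)
      · exact h1 x ⟨hx1, hx3⟩
  rw [hsets]
  ring

theorem pot_insert_left (E : Finset (Finset V)) {VL : Finset V} (VR : Finset V) {u : V}
    (hu : u ∉ VL) : pot E (insert u VL) VR = pot E VL VR + wt E VL VR u := by
  unfold pot wt
  rw [← Finset.sum_filter_add_sum_filter_not (E.filter (fun e => e ∩ VR = ∅))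
      (fun e => u ∈ e) (fun e => (2:ℚ) ^ (-((e \ insert u VL).card : ℤ))),
    ← Finset.sum_filter_add_sum_filter_not (E.filter (fun e => e ∩ VR = ∅))
      (fun e => u ∈ e) (fun e => (2:ℚ) ^ (-((e \ VL).card : ℤ)))]
  rw [Finset.filter_filter, Finset.filter_filter]
  have h1 : ∑ e ∈ E.filter (fun e => e ∩ VR = ∅ ∧ u ∈ e),
        (2:ℚ) ^ (-((e \ insert u VL).card : ℤ))
      = ∑ e ∈ E.filter (fun e => e ∩ VR = ∅ ∧ u ∈ e),
        ((2:ℚ) ^ (-((e \ VL).card : ℤ)) + (2:ℚ) ^ (-((e \ VL).card : ℤ))) := by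
    refine Finset.sum_congr rfl fun e he => ?_
    rw [Finset.mem_filter] at he
    have hue : u ∈ e \ VL := Finset.mem_sdiff.mpr ⟨he.2.2, hu⟩
    have hk : 1 ≤ (e \ VL).card := Finset.card_pos.mpr ⟨u, hue⟩
    rw [Finset.sdiff_insert, Finset.card_erase_of_mem hue]
    have e1 : (-(((e \ VL).card - 1 : ℕ) : ℤ)) = (-((e \ VL).card : ℤ)) + 1 := by omega
    rw [e1, zpow_add₀ (by norm_num : (2:ℚ) ≠ 0), zpow_one]
    ring
  have h2 : ∑ e ∈ E.filter (fun e => e ∩ VR = ∅ ∧ ¬ u ∈ e),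
        (2:ℚ) ^ (-((e \ insert u VL).card : ℤ))
      = ∑ e ∈ E.filter (fun e => e ∩ VR = ∅ ∧ ¬ u ∈ e),
        (2:ℚ) ^ (-((e \ VL).card : ℤ)) := by
    refine Finset.sum_congr rfl fun e he => ?_
    rw [Finset.mem_filter] at he
    rw [Finset.sdiff_insert, Finset.erase_eq_of_notMem
      (fun hmem => he.2.2 (Finset.mem_sdiff.mp hmem).1)]
  rw [h1, h2, Finset.sum_add_distrib]
  ring

end Potential

section Potential2
variable {V : Type} [Fintype V] [DecidableEq V]

theorem wt_insert_left_le (E : Finset (Finset V)) {VL : Finset V} (VR : Finset V)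
    {u v : V} (hu : u ∉ VL) (hv : v ∉ VL) (huv : u ≠ v) :
    wt E (insert u VL) VR v ≤ wt E VL VR v
      + ((E.filter (fun e => u ∈ e ∧ v ∈ e)).card : ℚ) / 4 := by
  unfold wt
  rw [← Finset.sum_filter_add_sum_filter_not (E.filter (fun e => e ∩ VR = ∅ ∧ v ∈ e))
      (fun e => u ∈ e) (fun e => (2:ℚ) ^ (-((e \ insert u VL).card : ℤ))),
    ← Finset.sum_filter_add_sum_filter_not (E.filter (fun e => e ∩ VR = ∅ ∧ v ∈ e))
      (fun e => u ∈ e) (fun e => (2:ℚ) ^ (-((e \ VL).card : ℤ)))]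
  have h2 : ∑ e ∈ (E.filter (fun e => e ∩ VR = ∅ ∧ v ∈ e)).filter (fun e => ¬ u ∈ e),
        (2:ℚ) ^ (-((e \ insert u VL).card : ℤ))
      = ∑ e ∈ (E.filter (fun e => e ∩ VR = ∅ ∧ v ∈ e)).filter (fun e => ¬ u ∈ e),
        (2:ℚ) ^ (-((e \ VL).card : ℤ)) := by
    refine Finset.sum_congr rfl fun e he => ?_
    rw [Finset.mem_filter] at he
    rw [Finset.sdiff_insert, Finset.erase_eq_of_notMem
      (fun hmem => he.2 (Finset.mem_sdiff.mp hmem).1)]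
  have h1 : ∑ e ∈ (E.filter (fun e => e ∩ VR = ∅ ∧ v ∈ e)).filter (fun e => u ∈ e),
        (2:ℚ) ^ (-((e \ insert u VL).card : ℤ))
      ≤ ∑ e ∈ (E.filter (fun e => e ∩ VR = ∅ ∧ v ∈ e)).filter (fun e => u ∈ e),
        ((2:ℚ) ^ (-((e \ VL).card : ℤ)) + 1/4) := by
    refine Finset.sum_le_sum fun e he => ?_
    rw [Finset.mem_filter, Finset.mem_filter] at he
    have hue : u ∈ e \ VL := Finset.mem_sdiff.mpr ⟨he.2, hu⟩
    have hve : v ∈ e \ VL := Finset.mem_sdiff.mpr ⟨he.1.2.2, hv⟩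
    have hk : 2 ≤ (e \ VL).card := by
      have : ({u, v} : Finset V) ⊆ e \ VL := by
        intro x hx
        rcases Finset.mem_insert.mp hx with h | h
        · exact h ▸ hue
        · exact (Finset.mem_singleton.mp h) ▸ hve
      calc 2 = ({u, v} : Finset V).card := by
              rw [Finset.card_insert_of_notMem (by simp [huv]), Finset.card_singleton]
        _ ≤ (e \ VL).card := Finset.card_le_card this
    have hsmall : (2:ℚ) ^ (-((e \ VL).card : ℤ)) ≤ 1/4 := by
      calc (2:ℚ) ^ (-((e \ VL).card : ℤ)) ≤ (2:ℚ) ^ (-2 : ℤ) :=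
            zpow_le_zpow_right₀ (by norm_num) (by omega)
        _ = 1/4 := by norm_num
    rw [Finset.sdiff_insert, Finset.card_erase_of_mem hue]
    have e1 : (-(((e \ VL).card - 1 : ℕ) : ℤ)) = (-((e \ VL).card : ℤ)) + 1 := by omega
    rw [e1, zpow_add₀ (by norm_num : (2:ℚ) ≠ 0), zpow_one]
    linarith
  have hcard : (((E.filter (fun e => e ∩ VR = ∅ ∧ v ∈ e)).filter (fun e => u ∈ e)).card : ℚ)
      ≤ ((E.filter (fun e => u ∈ e ∧ v ∈ e)).card : ℚ) := by
    have : (E.filter (fun e => e ∩ VR = ∅ ∧ v ∈ e)).filter (fun e => u ∈ e)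
        ⊆ E.filter (fun e => u ∈ e ∧ v ∈ e) := by
      intro e he
      rw [Finset.mem_filter, Finset.mem_filter] at he
      exact Finset.mem_filter.mpr ⟨he.1.1, he.2, he.1.2.2⟩
    exact_mod_cast Finset.card_le_card this
  rw [h2]
  rw [Finset.sum_add_distrib, Finset.sum_const, nsmul_eq_mul] at h1
  linarith

theorem score_eq_pot_full (E : Finset (Finset V)) {VL VR : Finset V}
    (hd : Disjoint VL VR) (h : (VL ∪ VR)ᶜ = (∅ : Finset V)) :
    (mbScoreH E VL VR : ℚ) = pot E VL VR := by
  have huniv : VL ∪ VR = Finset.univ := by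
    rwa [Finset.compl_eq_empty_iff] at h
  have hsets : E.filter (fun e => e ∩ VR = ∅) = E.filter (fun e => e ⊆ VL) := by
    apply Finset.filter_congr
    intro e _
    constructor
    · intro he x hx
      have : x ∈ VL ∪ VR := huniv ▸ Finset.mem_univ x
      rcases Finset.mem_union.mp this with h' | h'
      · exact h'
      · exact absurd (Finset.mem_inter.mpr ⟨hx, h'⟩) (by simp [he])
    · intro he
      rw [Finset.eq_empty_iff_forall_notMem]
      intro x hx
      rw [Finset.mem_inter] at hx
      exact (Finset.disjoint_left.mp hd) (he hx.1) hx.2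
  unfold pot mbScoreH
  rw [hsets]
  rw [Finset.sum_congr rfl (fun e he => ?_)]
  · rw [Finset.sum_const, nsmul_eq_mul, mul_one]
    push_cast; ring
  · rw [Finset.sdiff_eq_empty_iff_subset.mpr (Finset.mem_filter.mp he).2]
    norm_num

end Potential2


/-- Erdős–Selfridge-type bounds for Maker-Breaker scoring positional
games: `Ls(H) ≥ Σ_e 2^{-|e|} - n·ℓ(H)/8` and `Rs(H) ≤ Σ_e 2^{-|e|}`. -/
theorem makerBreaker_scoring_potential_bounds {V : Type} [Fintype V] [DecidableEq V]
    (E : Finset (Finset V)) :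
    (∑ e ∈ E, (2 : ℚ) ^ (-(e.card : ℤ))) -
        (Fintype.card V : ℚ) *
          (((Finset.univ.filter (fun p : V × V => p.1 ≠ p.2)).sup
            (fun p => (E.filter (fun e => p.1 ∈ e ∧ p.2 ∈ e)).card) : ℕ) : ℚ) / 8 ≤
      (gameValue (mbScoreH E) true ∅ ∅ : ℚ) ∧
    (gameValue (mbScoreH E) false ∅ ∅ : ℚ) ≤ ∑ e ∈ E, (2 : ℚ) ^ (-(e.card : ℤ)) := by
  set L : ℕ := (Finset.univ.filter (fun p : V × V => p.1 ≠ p.2)).sup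
      (fun p => (E.filter (fun e => p.1 ∈ e ∧ p.2 ∈ e)).card) with hLdef
  have hLnn : (0:ℚ) ≤ (L:ℚ) := Nat.cast_nonneg _
  have hpot0 : pot E ∅ ∅ = ∑ e ∈ E, (2:ℚ) ^ (-(e.card : ℤ)) := by
    unfold pot
    rw [Finset.filter_true_of_mem (fun e _ => Finset.inter_empty e)]
    exact Finset.sum_congr rfl fun e _ => by rw [Finset.sdiff_empty]
  have hdisj0 : Disjoint (∅ : Finset V) (∅ : Finset V) := Finset.disjoint_empty_left _
  have hcard0 : (((∅ : Finset V) ∪ (∅ : Finset V))ᶜ).card = Fintype.card V := by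
    simp [Finset.card_univ]
  constructor
  · -- Maker bound
    have key := le_gameValue_of_potential (mbScoreH E)
      (fun VL VR => pot E VL VR - (((VL ∪ VR)ᶜ).card : ℚ) * (L : ℚ) / 8)
      (fun VL VR hd h => by
        simp only [h, Finset.card_empty, Nat.cast_zero, zero_mul, zero_div, sub_zero]
        exact le_of_eq (score_eq_pot_full E hd h).symm)
      (fun VL VR hd h => by
        obtain ⟨u, hu, hmax⟩ := Finset.exists_max_image ((VL ∪ VR)ᶜ) (wt E VL VR)
          (Finset.nonempty_iff_ne_empty.mpr h)
        have huL : u ∉ VL := fun hx => (Finset.mem_compl.mp hu) (Finset.mem_union_left _ hx)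
        refine ⟨u, hu, ?_, ?_⟩
        · skip
          rw [pot_insert_left E VR huL]
          have h1 : 0 ≤ wt E VL VR u := wt_nonneg E VL VR u
          have h2 : (((insert u VL ∪ VR)ᶜ).card : ℚ) ≤ (((VL ∪ VR)ᶜ).card : ℚ) := by
            exact_mod_cast Finset.card_le_card (Finset.compl_subset_compl.mpr
              (Finset.union_subset_union_left (Finset.subset_insert u VL)))
          have hprod : (((insert u VL ∪ VR)ᶜ).card : ℚ) * (L:ℚ)
              ≤ (((VL ∪ VR)ᶜ).card : ℚ) * (L:ℚ) := mul_le_mul_of_nonneg_right h2 hLnn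
          linarith
        · intro v hv
          skip
          have hvk := Finset.mem_compl.mp hv
          simp only [Finset.mem_union, Finset.mem_insert, not_or] at hvk
          obtain ⟨⟨hvu, hvL⟩, hvR⟩ := hvk
          have hvold : v ∈ (VL ∪ VR)ᶜ := Finset.mem_compl.mpr (by
            simp [Finset.mem_union, hvL, hvR])
          rw [pot_insert_right, pot_insert_left E VR huL]
          have hw1 : wt E (insert u VL) VR v ≤ wt E VL VR v
              + ((E.filter (fun e => u ∈ e ∧ v ∈ e)).card : ℚ) / 4 :=
            wt_insert_left_le E VR huL hvL (Ne.symm hvu)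
          have hcardL : ((E.filter (fun e => u ∈ e ∧ v ∈ e)).card : ℚ) ≤ (L:ℚ) := by
            have : (E.filter (fun e => u ∈ e ∧ v ∈ e)).card ≤ L := by
              rw [hLdef]
              exact Finset.le_sup (f := fun p : V × V =>
                (E.filter (fun e => p.1 ∈ e ∧ p.2 ∈ e)).card)
                (Finset.mem_filter.mpr ⟨Finset.mem_univ ((u, v) : V × V), by simpa using Ne.symm hvu⟩)
            exact_mod_cast this
          have hw2 : wt E VL VR v ≤ wt E VL VR u := hmax v hvold
          have hc2 : (((insert u VL ∪ insert v VR)ᶜ).card : ℚ) + 2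
              ≤ (((VL ∪ VR)ᶜ).card : ℚ) := by
            have hsub : (insert u VL ∪ insert v VR)ᶜ ⊆ (((VL ∪ VR)ᶜ).erase u).erase v := by
              intro x hx
              have hxk := Finset.mem_compl.mp hx
              simp only [Finset.mem_union, Finset.mem_insert, not_or] at hxk
              rw [Finset.mem_erase, Finset.mem_erase, Finset.mem_compl]
              exact ⟨hxk.2.1, hxk.1.1, by simp [Finset.mem_union, hxk.1.2, hxk.2.2]⟩
            have hle := Finset.card_le_card hsub
            have hcv : v ∈ ((VL ∪ VR)ᶜ).erase u := Finset.mem_erase.mpr ⟨hvu, hvold⟩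
            rw [Finset.card_erase_of_mem hcv, Finset.card_erase_of_mem hu] at hle
            have hp1 : 1 ≤ (((VL ∪ VR)ᶜ).erase u).card := Finset.card_pos.mpr ⟨v, hcv⟩
            rw [Finset.card_erase_of_mem hu] at hp1
            have : ((insert u VL ∪ insert v VR)ᶜ).card + 2 ≤ ((VL ∪ VR)ᶜ).card := by omega
            exact_mod_cast this
          have hprod : (((insert u VL ∪ insert v VR)ᶜ).card : ℚ) * (L:ℚ)
              ≤ ((((VL ∪ VR)ᶜ).card : ℚ) - 2) * (L:ℚ) :=
            mul_le_mul_of_nonneg_right (by linarith) hLnn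
          linarith)
      (((∅ : Finset V) ∪ (∅ : Finset V))ᶜ).card ∅ ∅ le_rfl hdisj0
    simp only [hcard0, hpot0] at key
    exact key
  · -- Breaker bound
    have key := gameValue_le_of_potential (mbScoreH E) (fun VL VR => pot E VL VR)
      (fun VL VR hd h => le_of_eq (score_eq_pot_full E hd h))
      (fun VL VR hd h => by
        obtain ⟨v, hv, hmax⟩ := Finset.exists_max_image ((VL ∪ VR)ᶜ) (wt E VL VR)
          (Finset.nonempty_iff_ne_empty.mpr h)
        refine ⟨v, hv, ?_, ?_⟩
        · skip
          rw [pot_insert_right]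
          linarith [wt_nonneg E VL VR v]
        · intro u hu
          skip
          have huk := Finset.mem_compl.mp hu
          simp only [Finset.mem_union, Finset.mem_insert, not_or] at huk
          have huL := huk.1
          have huR := huk.2.2
          have huold : u ∈ (VL ∪ VR)ᶜ := Finset.mem_compl.mpr (by
            simp [Finset.mem_union, huL, huR])
          rw [pot_insert_left E (insert v VR) huL, pot_insert_right]
          have h1 := wt_mono E VL (Finset.subset_insert v VR) u
          have h2 := hmax u huold
          linarith)
      (((∅ : Finset V) ∪ (∅ : Finset V))ᶜ).card ∅ ∅ le_rfl hdisj0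
    simp only [hpot0] at key
    exact key
end

section
/- Let H be the disjoint union of 2k paths on three vertices (k ≥ 1). In Maker-Breaker Incidence on H with Breaker moving first, the optimal score satisfies Rs(H) ≤ k, i.e. Breaker can ensure Maker scores at most k points; this matches the upper bound m/4 = 4k/4 = k. -/
/-- The disjoint union of `m` copies of the path on three vertices. -/
def unionP3 (m : ℕ) : SimpleGraph (Fin m × Fin 3) where
  Adj p q := p.1 = q.1 ∧ (SimpleGraph.pathGraph 3).Adj p.2 q.2
  symm := ⟨fun p q h => ⟨h.1.symm, (SimpleGraph.pathGraph 3).symm.symm _ _ h.2⟩⟩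
  loopless := ⟨fun p h => (SimpleGraph.pathGraph 3).loopless.irrefl p.2 h.2⟩

theorem gameValue_le_of_inv {V : Type} [Fintype V] [DecidableEq V]
    (score : Finset V → Finset V → ℤ) (B : ℤ)
    (I : Bool → Finset V → Finset V → Prop)
    (Hterm : ∀ b VL VR, (VL ∪ VR)ᶜ = (∅ : Finset V) → I b VL VR → score VL VR ≤ B)
    (Hfalse : ∀ VL VR, (VL ∪ VR)ᶜ ≠ (∅ : Finset V) → I false VL VR →
       ∃ v ∈ (VL ∪ VR)ᶜ, I true VL (insert v VR))
    (Htrue : ∀ VL VR, (VL ∪ VR)ᶜ ≠ (∅ : Finset V) → I true VL VR →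
       ∀ v ∈ (VL ∪ VR)ᶜ, I false (insert v VL) VR) :
    ∀ b VL VR, I b VL VR → gameValue score b VL VR ≤ B := by
  intro b VL VR hI
  generalize hn : ((VL ∪ VR)ᶜ).card = n
  induction n using Nat.strong_induction_on generalizing b VL VR with
  | _ n ih =>
  rw [gameValue]
  by_cases h : (VL ∪ VR)ᶜ = (∅ : Finset V)
  · simp only [h, dif_pos]
    exact Hterm b VL VR h hI
  · simp only [h, dif_neg, not_false_iff]
    cases b with
    | true =>
      refine Finset.sup'_le (Finset.attach_nonempty_iff.mpr (Finset.nonempty_iff_ne_empty.mpr h)) _ ?_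
      rintro ⟨v, hv⟩ -
      have hcard : ((insert v VL ∪ VR)ᶜ).card < n := by
        rw [Finset.insert_union, Finset.compl_insert, ← hn]
        exact Finset.card_erase_lt_of_mem hv
      exact ih _ hcard false (insert v VL) VR (Htrue VL VR h hI v hv) rfl
    | false =>
      obtain ⟨v, hv, hI'⟩ := Hfalse VL VR h hI
      have hcard : ((VL ∪ insert v VR)ᶜ).card < n := by
        rw [Finset.union_insert, Finset.compl_insert, ← hn]
        exact Finset.card_erase_lt_of_mem hv
      refine le_trans (Finset.inf'_le _ (Finset.mem_attach _ ⟨v, hv⟩)) ?_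
      exact ih _ hcard true VL (insert v VR) hI' rfl

def pairf (k : ℕ) (p : Fin (2*k) × Fin 3) : Fin (2*k) × Fin 3 :=
  if p.2 = 1 then (p.1.rev, 1) else (p.1, if p.2 = 0 then 2 else 0)

lemma pairf_invol (k : ℕ) (p : Fin (2*k) × Fin 3) : pairf k (pairf k p) = p := by
  obtain ⟨i, a⟩ := p
  fin_cases a <;> simp [pairf, Fin.rev_rev]

lemma pairf_ne (k : ℕ) (p : Fin (2*k) × Fin 3) : pairf k p ≠ p := by
  obtain ⟨i, a⟩ := p
  fin_cases a <;> simp [pairf]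
  · -- rev i ≠ i
    intro h
    have h1 : (Fin.rev i).val = 2*k - (i.val + 1) := Fin.val_rev i
    have h2 : i.val < 2*k := i.isLt
    have : (Fin.rev i).val = i.val := by rw [h]
    omega

abbrev Vk (k : ℕ) := Fin (2*k) × Fin 3

def PInv (k : ℕ) : Bool → Finset (Vk k) → Finset (Vk k) → Prop := fun b VL VR =>
  Disjoint VL VR ∧
    (if b then ∀ v ∈ VL, pairf k v ∈ VR
     else (∀ v ∈ VL, pairf k v ∈ VR) ∨
       ∃ w ∈ VL, pairf k w ∈ (VL ∪ VR)ᶜ ∧ ∀ v ∈ VL, v ≠ w → pairf k v ∈ VR)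

lemma PInv_true_step (k : ℕ) (VL VR : Finset (Vk k))
    (hI : PInv k true VL VR) (v : Vk k) (hv : v ∈ (VL ∪ VR)ᶜ) :
    PInv k false (insert v VL) VR := by
  obtain ⟨hd, hP⟩ := hI
  simp only [if_pos] at hP
  rw [Finset.mem_compl, Finset.mem_union, not_or] at hv
  obtain ⟨hvL, hvR⟩ := hv
  refine ⟨Finset.disjoint_insert_left.mpr ⟨hvR, hd⟩, ?_⟩
  simp only [if_neg Bool.false_ne_true]
  by_cases hfv : pairf k v ∈ VR
  · left
    intro u hu
    rcases Finset.mem_insert.mp hu with rfl | hu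
    · exact hfv
    · exact hP u hu
  · right
    refine ⟨v, Finset.mem_insert_self _ _, ?_, ?_⟩
    · rw [Finset.mem_compl, Finset.mem_union, not_or, Finset.mem_insert, not_or]
      refine ⟨⟨pairf_ne k v, ?_⟩, hfv⟩
      intro hmem
      have := hP _ hmem
      rw [pairf_invol] at this
      exact hvR this
    · intro u hu hne
      rcases Finset.mem_insert.mp hu with rfl | hu
      · exact absurd rfl hne
      · exact hP u hu

lemma PInv_false_step (k : ℕ) (VL VR : Finset (Vk k))
    (hI : PInv k false VL VR) (hne : (VL ∪ VR)ᶜ ≠ (∅ : Finset (Vk k))) :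
    ∃ v ∈ (VL ∪ VR)ᶜ, PInv k true VL (insert v VR) := by
  obtain ⟨hd, hP⟩ := hI
  simp only [if_neg Bool.false_ne_true] at hP
  rcases hP with hP | ⟨w, hwL, hwf, hP⟩
  · obtain ⟨v, hv⟩ := Finset.nonempty_iff_ne_empty.mpr hne
    refine ⟨v, hv, ?_, ?_⟩
    · rw [Finset.mem_compl, Finset.mem_union, not_or] at hv
      exact Finset.disjoint_insert_right.mpr ⟨hv.1, hd⟩
    · simp only [if_pos]
      intro u hu
      exact Finset.mem_insert_of_mem (hP u hu)
  · refine ⟨pairf k w, hwf, ?_, ?_⟩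
    · rw [Finset.mem_compl, Finset.mem_union, not_or] at hwf
      exact Finset.disjoint_insert_right.mpr ⟨hwf.1, hd⟩
    · simp only [if_pos]
      intro u hu
      by_cases huw : u = w
      · subst huw; exact Finset.mem_insert_self _ _
      · exact Finset.mem_insert_of_mem (hP u hu huw)

lemma score_bound (k : ℕ) (VL VR : Finset (Vk k))
    (hd : Disjoint VL VR) (hP : ∀ v ∈ VL, pairf k v ∈ VR) :
    mbScore (unionP3 (2*k)) VL VR ≤ (k : ℤ) := by
  classical
  set S : Set (Sym2 (Vk k)) := {e ∈ (unionP3 (2*k)).edgeSet | ∀ w ∈ e, w ∈ VL} with hS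
  set A : Set (Vk k) := {p | p.2 ≠ 1 ∧ ((p.1, (1 : Fin 3)) : Vk k) ∈ VL ∧ p ∈ VL} with hA
  set h : Vk k → Sym2 (Vk k) := fun p => s((p.1, (1 : Fin 3)), p) with hh
  set Tf : Finset (Fin (2*k)) := Finset.univ.filter (fun i => ((i, (1 : Fin 3)) : Vk k) ∈ VL) with hTf
  -- no vertex is in both VL and VR
  have hdm : ∀ p : Vk k, p ∈ VL → p ∈ VR → False := fun p h1 h2 =>
    Finset.disjoint_left.mp hd h1 h2
  -- S ⊆ h '' A
  have hSA : S ⊆ h '' A := by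
    rintro e ⟨he, hw⟩
    induction e using Sym2.ind with
    | _ p q =>
      rw [SimpleGraph.mem_edgeSet] at he
      obtain ⟨h1, h2⟩ := he
      have hpL : p ∈ VL := hw p (Sym2.mem_mk_left p q)
      have hqL : q ∈ VL := hw q (Sym2.mem_mk_right p q)
      rw [SimpleGraph.pathGraph_adj] at h2
      obtain ⟨i, a⟩ := p
      obtain ⟨j, b⟩ := q
      dsimp at h1 h2
      subst h1
      have ha3 : a.val < 3 := a.isLt
      have hb3 : b.val < 3 := b.isLt
      rcases h2 with h2 | h2
      · -- a + 1 = b : edges (0,1) or (1,2)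
        rcases (by omega : a.val = 0 ∨ a.val = 1 ∨ a.val = 2) with h0 | h0 | h0
        · have hae : a = 0 := Fin.ext h0
          have hbe : b = 1 := Fin.ext (by omega)
          subst hae hbe
          exact ⟨(i, 0), ⟨(by decide : (0:Fin 3) ≠ 1), hqL, hpL⟩, Sym2.eq_swap⟩
        · have hae : a = 1 := Fin.ext h0
          have hbe : b = 2 := Fin.ext (by omega)
          subst hae hbe
          exact ⟨(i, 2), ⟨(by decide : (2:Fin 3) ≠ 1), hpL, hqL⟩, rfl⟩
        · omega
      · rcases (by omega : b.val = 0 ∨ b.val = 1 ∨ b.val = 2) with h0 | h0 | h0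
        · have hbe : b = 0 := Fin.ext h0
          have hae : a = 1 := Fin.ext (by omega)
          subst hae hbe
          exact ⟨(i, 0), ⟨(by decide : (0:Fin 3) ≠ 1), hpL, hqL⟩, rfl⟩
        · have hbe : b = 1 := Fin.ext h0
          have hae : a = 2 := Fin.ext (by omega)
          subst hae hbe
          exact ⟨(i, 2), ⟨(by decide : (2:Fin 3) ≠ 1), hqL, hpL⟩, Sym2.eq_swap⟩
        · omega
  -- h is injective on A
  have hinj : Set.InjOn h A := by
    rintro p ⟨hp1, -, -⟩ q ⟨hq1, -, -⟩ hpq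
    rw [hh, Sym2.eq_iff] at hpq
    rcases hpq with ⟨-, h2⟩ | ⟨h1, h2⟩
    · exact h2
    · exact absurd (congrArg Prod.snd h2) hp1
  -- fst maps A into Tf injectively
  have hfst : ∀ p ∈ A, p.1 ∈ (Tf : Set (Fin (2*k))) := by
    rintro p ⟨-, hp2, -⟩
    simp only [hTf, Finset.coe_filter, Set.mem_setOf_eq, Finset.mem_univ, true_and]
    exact hp2
  have hfstinj : Set.InjOn Prod.fst A := by
    rintro p ⟨hp1, -, hp3⟩ q ⟨hq1, -, hq3⟩ hpq
    obtain ⟨i, a⟩ := p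
    obtain ⟨j, b⟩ := q
    dsimp at hpq hp1 hq1 hp3 hq3
    subst hpq
    have hab : a = b := by
      by_contra hne
      -- a, b ∈ {0, 2}, a ≠ b, so pairf of one is the other
      have ha : a = 0 ∨ a = 2 := by
        rcases (by omega : a.val = 0 ∨ a.val = 1 ∨ a.val = 2) with h0 | h0 | h0
        · exact Or.inl (Fin.ext h0)
        · exact absurd (Fin.ext h0) hp1
        · exact Or.inr (Fin.ext h0)
      have hb : b = 0 ∨ b = 2 := by
        rcases (by omega : b.val = 0 ∨ b.val = 1 ∨ b.val = 2) with h0 | h0 | h0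
        · exact Or.inl (Fin.ext h0)
        · exact absurd (Fin.ext h0) hq1
        · exact Or.inr (Fin.ext h0)
      rcases ha with rfl | rfl <;> rcases hb with rfl | rfl
      · exact hne rfl
      · exact hdm (i, 2) hq3 (by have := hP _ hp3; simpa [pairf] using this)
      · exact hdm (i, 0) hq3 (by have := hP _ hp3; simpa [pairf] using this)
      · exact hne rfl
    rw [hab]
  -- Tf.card ≤ k
  have hTcard : Tf.card ≤ k := by
    have hdisj : Disjoint Tf (Tf.image Fin.rev) := by
      rw [Finset.disjoint_left]
      intro i hi hi'
      obtain ⟨j, hj, hji⟩ := Finset.mem_image.mp hi'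
      have hji' : j = Fin.rev i := by rw [← hji, Fin.rev_rev]
      subst hji'
      simp only [hTf, Finset.mem_filter] at hi hj
      have := hP _ hj.2
      have hpf : pairf k (Fin.rev i, 1) = (i, 1) := by simp [pairf, Fin.rev_rev]
      rw [hpf] at this
      exact hdm (i, 1) hi.2 this
    have hcard2 : Tf.card + Tf.card ≤ 2 * k := by
      have := Finset.card_union_of_disjoint hdisj
      have himg : (Tf.image Fin.rev).card = Tf.card :=
        Finset.card_image_of_injective _ Fin.rev_injective
      have hle : (Tf ∪ Tf.image Fin.rev).card ≤ Fintype.card (Fin (2*k)) :=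
        Finset.card_le_card (Finset.subset_univ _) |>.trans_eq (Finset.card_univ)
      rw [this, himg] at hle
      simpa using hle
    omega
  -- chain the cardinality bounds
  have c1 : S.ncard ≤ (h '' A).ncard := Set.ncard_le_ncard hSA (Set.toFinite _)
  have c2 : (h '' A).ncard = A.ncard := Set.ncard_image_of_injOn hinj
  have c3 : A.ncard ≤ (Tf : Set (Fin (2*k))).ncard :=
    Set.ncard_le_ncard_of_injOn Prod.fst hfst hfstinj (Set.toFinite _)
  have c4 : (Tf : Set (Fin (2*k))).ncard = Tf.card := Set.ncard_coe_finset _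
  have : S.ncard ≤ k := by omega
  unfold mbScore
  rw [← hS]
  exact_mod_cast this

/-- On the disjoint union of `2k` paths on three vertices, Breaker
moving first can ensure Maker scores at most `k` points (matching `m/4 = k`). -/
theorem makerBreaker_incidence_union_of_P3 (k : ℕ) (hk : 1 ≤ k) :
    RsMB (unionP3 (2 * k)) ≤ (k : ℤ) := by
  have Hterm : ∀ b (VL VR : Finset (Vk k)), (VL ∪ VR)ᶜ = (∅ : Finset (Vk k)) →
      PInv k b VL VR → mbScore (unionP3 (2 * k)) VL VR ≤ (k : ℤ) := by
    intro b VL VR hc ⟨hd, hP⟩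
    cases b with
    | true =>
      simp only [if_pos] at hP
      exact score_bound k VL VR hd hP
    | false =>
      simp only [if_neg Bool.false_ne_true] at hP
      rcases hP with hP | ⟨w, -, hwf, -⟩
      · exact score_bound k VL VR hd hP
      · rw [hc] at hwf
        exact absurd hwf (Finset.notMem_empty _)
  have hstart : PInv k false (∅ : Finset (Vk k)) ∅ := by
    refine ⟨Finset.disjoint_empty_left _, ?_⟩
    simp only [if_neg Bool.false_ne_true]
    left
    intro v hv
    exact absurd hv (Finset.notMem_empty _)
  exact gameValue_le_of_inv (mbScore (unionP3 (2 * k))) (k : ℤ) (PInv k) Hterm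
    (fun VL VR hne hI => PInv_false_step k VL VR hI hne)
    (fun VL VR _ hI v hv => PInv_true_step k VL VR hI v hv)
    false ∅ ∅ hstart
end
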